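/- Let K be a field complete with respect to a non-archimedean absolute value, with valuation ring O, and let q be a prime power with F_q ⊆ K. Let A, B ∈ M_n(O) and consider the system A·Y^q − Y + B = 0 in the n² entries of Y, where Y^q denotes entry-wise q-th powers. If Y' ∈ M_n(O) satisfies ‖A·(Y')^q − Y' + B‖ < 1, then there exists a unique Y ∈ M_n(O) with A·Y^q − Y + B = 0 and ‖Y − Y'‖ = ‖A·(Y')^q − Y' + B‖. -/

import Mathlib

/-- The maximum norm of a matrix over a normed field: the maximum of the norms of its entries. -/
noncomputable def matSupNorm {K : Type*} [NormedField K] {n : ℕ}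
    (M : Matrix (Fin n) (Fin n) K) : ℝ :=
  ⨆ i, ⨆ j, ‖M i j‖

section helpers

attribute [local instance] Matrix.normedAddCommGroup

variable {K : Type*} [NormedField K] {n : ℕ}

lemma entry_le_norm (M : Matrix (Fin n) (Fin n) K) (i j : Fin n) : ‖M i j‖ ≤ ‖M‖ :=
  (norm_le_pi_norm (M i) j).trans (norm_le_pi_norm M i)

lemma norm_le_of_entries {M : Matrix (Fin n) (Fin n) K} {C : ℝ} (hC : 0 ≤ C)
    (h : ∀ i j, ‖M i j‖ ≤ C) : ‖M‖ ≤ C :=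
  (pi_norm_le_iff_of_nonneg hC).2 fun i => (pi_norm_le_iff_of_nonneg hC).2 (h i)

lemma matSupNorm_eq (M : Matrix (Fin n) (Fin n) K) : matSupNorm M = ‖M‖ := by
  apply le_antisymm
  · refine Real.iSup_le (fun i => Real.iSup_le (fun j => entry_le_norm M i j) (norm_nonneg M))
      (norm_nonneg M)
  · refine norm_le_of_entries (Real.iSup_nonneg fun i => Real.iSup_nonneg fun j => norm_nonneg _)
      (fun i j => ?_)
    have h1 : ‖M i j‖ ≤ ⨆ j, ‖M i j‖ :=
      le_ciSup (Finite.bddAbove_range fun j => ‖M i j‖) j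
    have h2 : (⨆ j, ‖M i j‖) ≤ ⨆ i, ⨆ j, ‖M i j‖ :=
      le_ciSup (Finite.bddAbove_range fun i => ⨆ j, ‖M i j‖) i
    exact le_trans h1 h2

lemma mat_nonarch (hna : IsNonarchimedean (fun x : K => ‖x‖))
    (M N : Matrix (Fin n) (Fin n) K) : ‖M + N‖ ≤ max ‖M‖ ‖N‖ := by
  refine norm_le_of_entries (le_max_of_le_left (norm_nonneg _)) (fun i j => ?_)
  exact le_trans (hna (M i j) (N i j))
    (max_le_max (entry_le_norm M i j) (entry_le_norm N i j))

lemma mat_nonarch_sub (hna : IsNonarchimedean (fun x : K => ‖x‖))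
    (M N : Matrix (Fin n) (Fin n) K) : ‖M - N‖ ≤ max ‖M‖ ‖N‖ := by
  have := mat_nonarch hna M (-N)
  simpa [sub_eq_add_neg] using this

lemma na_sum (hna : IsNonarchimedean (fun x : K => ‖x‖)) {ι : Type*} (s : Finset ι)
    (g : ι → K) {C : ℝ} (hC : 0 ≤ C) (h : ∀ i ∈ s, ‖g i‖ ≤ C) : ‖∑ i ∈ s, g i‖ ≤ C := by
  induction s using Finset.cons_induction with
  | empty => simpa using hC
  | cons a s ha ih =>
    rw [Finset.sum_cons]
    exact le_trans (hna _ _) (max_le (h a (Finset.mem_cons_self a s))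
      (ih fun i hi => h i (Finset.mem_cons_of_mem hi)))

lemma norm_matmul_le (hna : IsNonarchimedean (fun x : K => ‖x‖))
    {A : Matrix (Fin n) (Fin n) K} (hA : ∀ i j, ‖A i j‖ ≤ 1)
    (M : Matrix (Fin n) (Fin n) K) : ‖A * M‖ ≤ ‖M‖ := by
  refine norm_le_of_entries (norm_nonneg M) (fun i j => ?_)
  rw [Matrix.mul_apply]
  refine na_sum hna _ _ (norm_nonneg M) (fun k _ => ?_)
  calc ‖A i k * M k j‖ = ‖A i k‖ * ‖M k j‖ := norm_mul _ _
    _ ≤ 1 * ‖M‖ := mul_le_mul (hA i k) (entry_le_norm M k j) (norm_nonneg _) zero_le_one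
    _ = ‖M‖ := one_mul _

lemma norm_map_pow_le (M : Matrix (Fin n) (Fin n) K) (q : ℕ) :
    ‖M.map (fun x => x ^ q)‖ ≤ ‖M‖ ^ q := by
  refine norm_le_of_entries (pow_nonneg (norm_nonneg M) q) (fun i j => ?_)
  rw [Matrix.map_apply, norm_pow]
  exact pow_le_pow_left₀ (norm_nonneg _) (entry_le_norm M i j) q

end helpers

/-- Let `K` be a field complete with respect to a non-archimedean absolute value,
with valuation ring `O`, containing `F_q` (so `K` has characteristic `p` and `q = p^e`).  Let
`A, B ∈ M_n(O)` and consider the system `A·Y^q − Y + B = 0` (entry-wise `q`-th powers).  If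
`Y' ∈ M_n(O)` satisfies `‖A·(Y')^q − Y' + B‖ < 1`, then there is a unique `Y ∈ M_n(O)` with
`A·Y^q − Y + B = 0` and `‖Y − Y'‖ = ‖A·(Y')^q − Y' + B‖`. -/
theorem stmt1 {K : Type*} [NormedField K] [CompleteSpace K]
    (hna : IsNonarchimedean (fun x : K => ‖x‖))
    (p e : ℕ) [Fact p.Prime] [CharP K p] (he : e ≠ 0) {n : ℕ}
    (A B : Matrix (Fin n) (Fin n) K)
    (hA : ∀ i j, ‖A i j‖ ≤ 1) (hB : ∀ i j, ‖B i j‖ ≤ 1)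
    (Y' : Matrix (Fin n) (Fin n) K) (hY' : ∀ i j, ‖Y' i j‖ ≤ 1)
    (hlt : matSupNorm (A * Y'.map (fun x => x ^ p ^ e) - Y' + B) < 1) :
    ∃! Y : Matrix (Fin n) (Fin n) K,
      (∀ i j, ‖Y i j‖ ≤ 1) ∧
      A * Y.map (fun x => x ^ p ^ e) - Y + B = 0 ∧
      matSupNorm (Y - Y') = matSupNorm (A * Y'.map (fun x => x ^ p ^ e) - Y' + B) := by
  classical
  letI : NormedAddCommGroup (Matrix (Fin n) (Fin n) K) := Matrix.normedAddCommGroup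
  haveI : CompleteSpace (Matrix (Fin n) (Fin n) K) := by
    show CompleteSpace (Fin n → Fin n → K); infer_instance
  set q : ℕ := p ^ e with hqdef
  have hp : p.Prime := Fact.out
  have hq2 : 2 ≤ q := le_trans hp.two_le (Nat.le_self_pow he p)
  set c : ℝ := ‖A * Y'.map (fun x => x ^ q) - Y' + B‖ with hc
  have hcmat : matSupNorm (A * Y'.map (fun x => x ^ q) - Y' + B) = c := matSupNorm_eq _
  rw [hcmat] at hlt
  have hc0 : 0 ≤ c := norm_nonneg _
  set f : Matrix (Fin n) (Fin n) K → Matrix (Fin n) (Fin n) K :=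
    fun Y => A * Y.map (fun x => x ^ q) + B with hf
  have hfY' : ‖f Y' - Y'‖ = c := by
    rw [hc]
    congr 1
    rw [hf]
    first | exact sub_add_eq_add_sub _ _ _ | exact (sub_add_eq_add_sub _ _ _).symm
  have hdiff : ∀ X Z : Matrix (Fin n) (Fin n) K,
      f X - f Z = A * ((X - Z).map (fun x => x ^ q)) := by
    intro X Z
    have hmap : (X - Z).map (fun x => x ^ q)
        = X.map (fun x => x ^ q) - Z.map (fun x => x ^ q) := by
      ext i j
      simp only [Matrix.map_apply, Matrix.sub_apply, hqdef]
      exact sub_pow_char_pow _ _ _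
    rw [hf]
    simp only
    rw [hmap, Matrix.mul_sub]
    abel
  have key : ∀ X Z : Matrix (Fin n) (Fin n) K, ‖f X - f Z‖ ≤ ‖X - Z‖ ^ q := by
    intro X Z
    rw [hdiff]
    exact le_trans (norm_matmul_le hna hA _) (norm_map_pow_le _ q)
  -- the closed ball around Y' of radius c
  set S : Set (Matrix (Fin n) (Fin n) K) := Metric.closedBall Y' c with hS
  have hY'S : Y' ∈ S := Metric.mem_closedBall_self hc0
  haveI : Nonempty S := ⟨⟨Y', hY'S⟩⟩
  haveI : @CompleteSpace (Matrix (Fin n) (Fin n) K) PseudoMetricSpace.toUniformSpace := by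
    show CompleteSpace (Fin n → Fin n → K); infer_instance
  haveI : @CompleteSpace S PseudoMetricSpace.toUniformSpace :=
    completeSpace_coe_iff_isComplete.2 Metric.isClosed_closedBall.isComplete
  have hdistS : ∀ X : Matrix (Fin n) (Fin n) K, X ∈ S → ‖X - Y'‖ ≤ c := by
    intro X hX
    rw [← dist_eq_norm]
    exact hX
  have hballdiff : ∀ X Z : Matrix (Fin n) (Fin n) K, X ∈ S → Z ∈ S → ‖X - Z‖ ≤ c := by
    intro X Z hX hZ
    have : X - Z = (X - Y') - (Z - Y') := by abel
    rw [this]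
    exact le_trans (mat_nonarch_sub hna _ _) (max_le (hdistS X hX) (hdistS Z hZ))
  have hmaps : ∀ X : Matrix (Fin n) (Fin n) K, X ∈ S → f X ∈ S := by
    intro X hX
    rw [hS, Metric.mem_closedBall, dist_eq_norm]
    have : f X - Y' = (f X - f Y') + (f Y' - Y') := by abel
    rw [this]
    refine le_trans (mat_nonarch hna _ _) (max_le ?_ hfY'.le)
    refine le_trans (key X Y') ?_
    calc ‖X - Y'‖ ^ q ≤ c ^ q := pow_le_pow_left₀ (norm_nonneg _) (hdistS X hX) q
      _ ≤ c := pow_le_of_le_one hc0 hlt.le (by omega)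
  set g : S → S := fun X => ⟨f X.1, hmaps X.1 X.2⟩ with hg
  have hκR : (0 : ℝ) ≤ c ^ (q - 1) := pow_nonneg hc0 _
  have hcontr : ContractingWith ((⟨c, hc0⟩ : NNReal) ^ (q - 1) : NNReal) g := by
    constructor
    · refine NNReal.coe_lt_one.1 ?_
      change c ^ (q - 1) < 1
      exact pow_lt_one₀ hc0 hlt (by omega)
    · refine LipschitzWith.of_dist_le_mul (fun X Z => ?_)
      rw [Subtype.dist_eq, Subtype.dist_eq, dist_eq_norm, dist_eq_norm]
      push_cast
      refine le_trans (key X.1 Z.1) ?_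
      have hq : q = (q - 1) + 1 := by omega
      calc ‖X.1 - Z.1‖ ^ q = ‖X.1 - Z.1‖ ^ (q - 1) * ‖X.1 - Z.1‖ := by
            conv_lhs => rw [hq, pow_succ]
        _ ≤ c ^ (q - 1) * ‖X.1 - Z.1‖ := by
            refine mul_le_mul_of_nonneg_right ?_ (norm_nonneg _)
            exact pow_le_pow_left₀ (norm_nonneg _) (hballdiff X.1 Z.1 X.2 Z.2) _
  set Ys : S := ContractingWith.fixedPoint g hcontr with hYs
  have hfixS : g Ys = Ys := ContractingWith.fixedPoint_isFixedPt hcontr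
  set Y : Matrix (Fin n) (Fin n) K := Ys.1 with hYdef
  have hYS : Y ∈ S := Ys.2
  have hfix : f Y = Y := congrArg Subtype.val hfixS
  have hYY' : ‖Y - Y'‖ ≤ c := hdistS Y hYS
  -- the defining equation
  have heqf : ∀ Z : Matrix (Fin n) (Fin n) K,
      (A * Z.map (fun x => x ^ q) - Z + B = 0) ↔ f Z = Z := by
    intro Z
    have h1 : A * Z.map (fun x => x ^ q) - Z + B = f Z - Z := by rw [hf]; first | exact sub_add_eq_add_sub _ _ _ | exact (sub_add_eq_add_sub _ _ _).symm
    rw [h1, sub_eq_zero]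
  -- entries of a matrix close to Y' are in O
  have hentries : ∀ Z : Matrix (Fin n) (Fin n) K, ‖Z - Y'‖ ≤ c → ∀ i j, ‖Z i j‖ ≤ 1 := by
    intro Z hZ i j
    have h1 : Z i j = (Z - Y') i j + Y' i j := by simp
    rw [h1]
    refine le_trans (hna _ _) (max_le ?_ (hY' i j))
    exact le_trans (entry_le_norm _ i j) (le_trans hZ hlt.le)
  -- norm equality for the fixed point
  have hnormY : ‖Y - Y'‖ = c := by
    refine le_antisymm hYY' ?_
    rcases eq_or_lt_of_le hc0 with h0 | h0
    · rw [← h0]; exact norm_nonneg _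
    have hsmall : ‖f Y' - f Y‖ < c := by
      refine lt_of_le_of_lt (key Y' Y) ?_
      have h1 : ‖Y' - Y‖ ≤ c := by
        rw [← norm_neg]; simpa using hYY'
      calc ‖Y' - Y‖ ^ q ≤ c ^ q := pow_le_pow_left₀ (norm_nonneg _) h1 q
        _ ≤ c ^ 2 := pow_le_pow_of_le_one hc0 hlt.le hq2
        _ < c := by nlinarith
    have hsplit : f Y' - Y' = (f Y' - f Y) + (Y - Y') := by rw [hfix]; abel
    have h2 : c ≤ max ‖f Y' - f Y‖ ‖Y - Y'‖ := by
      rw [← hfY', hsplit]; exact mat_nonarch hna _ _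
    by_contra hcon
    push_neg at hcon
    exact absurd h2 (not_le.2 (max_lt hsmall hcon))
  refine ⟨Y, ⟨hentries Y hYY' , ?_, ?_⟩, ?_⟩
  · exact (heqf Y).2 hfix
  · rw [matSupNorm_eq, hcmat, hnormY]
  · rintro Z ⟨hZ1, hZ2, hZ3⟩
    have hfZ : f Z = Z := (heqf Z).1 hZ2
    have hZY' : ‖Z - Y'‖ = c := by
      rw [matSupNorm_eq, hcmat] at hZ3; exact hZ3
    have hZY : ‖Z - Y‖ ≤ c := by
      have h1 : Z - Y = (Z - Y') - (Y - Y') := by abel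
      rw [h1]
      exact le_trans (mat_nonarch_sub hna _ _) (max_le hZY'.le hYY')
    by_contra hne
    have hd0 : 0 < ‖Z - Y‖ := norm_pos_iff.2 (sub_ne_zero.2 hne)
    have hd1 : ‖Z - Y‖ < 1 := lt_of_le_of_lt hZY hlt
    have hle : ‖Z - Y‖ ≤ ‖Z - Y‖ ^ q := by
      have h1 : Z - Y = f Z - f Y := by rw [hfZ, hfix]
      calc ‖Z - Y‖ = ‖f Z - f Y‖ := by rw [← h1]
        _ ≤ ‖Z - Y‖ ^ q := key Z Y
    have hlt2 : ‖Z - Y‖ ^ q < ‖Z - Y‖ := by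
      calc ‖Z - Y‖ ^ q ≤ ‖Z - Y‖ ^ 2 := pow_le_pow_of_le_one (norm_nonneg _) hd1.le hq2
        _ < ‖Z - Y‖ := by nlinarith
    linarith
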